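/- Let ℰ, 𝒜 ∈ ℝ^{L×N} and ℬ ∈ ℝ^{L×Q}. Then for every i ∈ ℕ₀, the i-th Wong subspace of the pencil sℰ − 𝒜 is contained in the image under the projection [I_N, 0] of the i-th Wong subspace of the pencil s[ℰ,0] − [𝒜,ℬ]: V^i_{[ℰ,𝒜]} ⊆ [I_N,0] V^i_{[[ℰ,0],[𝒜,ℬ]]}. Consequently, V*_{[ℰ,𝒜]} ⊆ [I_N,0] V*_{[[ℰ,0],[𝒜,ℬ]]}. -/

import Mathlib

open Matrix Set Filter

/-- Euclidean norm of a vector in `ℝ^ι`. -/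
noncomputable def enorm {ι : Type*} [Fintype ι] (x : ι → ℝ) : ℝ :=
  Real.sqrt (x ⬝ᵥ x)

/-- Spectral (Euclidean operator) norm of a real matrix. -/
noncomputable def matNorm {ι κ : Type*} [Fintype ι] [Fintype κ] [DecidableEq κ]
    (M : Matrix ι κ ℝ) : ℝ :=
  ‖LinearMap.toContinuousLinearMap (Matrix.toEuclideanLin M)‖

/-- Largest eigenvalue of a (symmetric) real matrix, as the supremum of its eigenvalues. -/
noncomputable def lamMax {q : Type*} [Fintype q] (M : Matrix q q ℝ) : ℝ :=
  sSup {r : ℝ | ∃ v : q → ℝ, v ≠ 0 ∧ M *ᵥ v = r • v}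

/-- The first Wong sequence `V^i` of the matrix pencil `sE - A`. -/
def wongV {L N : Type*} [Fintype N] (E A : Matrix L N ℝ) : ℕ → Set (N → ℝ)
  | 0 => Set.univ
  | i + 1 => {x | A *ᵥ x ∈ (fun v => E *ᵥ v) '' wongV E A i}

/-- The first Wong limit `V* = ⋂ V^i` of the matrix pencil `sE - A`. -/
def wongVstar {L N : Type*} [Fintype N] (E A : Matrix L N ℝ) : Set (N → ℝ) :=
  ⋂ i, wongV E A i

/-- The second Wong sequence `W^i` of the matrix pencil `sE - A`. -/
def wongW {L N : Type*} [Fintype N] (E A : Matrix L N ℝ) : ℕ → Set (N → ℝ)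
  | 0 => {0}
  | i + 1 => {x | E *ᵥ x ∈ (fun v => A *ᵥ v) '' wongW E A i}

/-- The second Wong limit `W* = ⋃ W^i` of the matrix pencil `sE - A`. -/
def wongWstar {L N : Type*} [Fintype N] (E A : Matrix L N ℝ) : Set (N → ℝ) :=
  ⋃ i, wongW E A i

/-- `M <_V 0` : the quadratic form of `M` is negative on `V \ {0}`. -/
def NegDefOn {ι : Type*} [Fintype ι] (M : Matrix ι ι ℝ) (V : Set (ι → ℝ)) : Prop :=
  ∀ v ∈ V, v ≠ 0 → v ⬝ᵥ (M *ᵥ v) < 0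

/-- `M >_V 0` : the quadratic form of `M` is positive on `V \ {0}`. -/
def PosDefOn {ι : Type*} [Fintype ι] (M : Matrix ι ι ℝ) (V : Set (ι → ℝ)) : Prop :=
  ∀ v ∈ V, v ≠ 0 → 0 < v ⬝ᵥ (M *ᵥ v)

/-- `M ≥_V 0` : the quadratic form of `M` is nonnegative on `V`. -/
def PosSemidefOn {ι : Type*} [Fintype ι] (M : Matrix ι ι ℝ) (V : Set (ι → ℝ)) : Prop :=
  ∀ v ∈ V, 0 ≤ v ⬝ᵥ (M *ᵥ v)


lemma aug_mem {L N Q : ℕ}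
    (E A : Matrix (Fin L) (Fin N) ℝ) (B : Matrix (Fin L) (Fin Q) ℝ) :
    ∀ i : ℕ, ∀ x ∈ wongV E A i, Sum.elim x (0 : Fin Q → ℝ) ∈
      wongV (Matrix.fromCols E (0 : Matrix (Fin L) (Fin Q) ℝ))
        (Matrix.fromCols A B) i := by
  intro i
  induction i with
  | zero => intro x _; trivial
  | succ i ih =>
    intro x hx
    obtain ⟨y, hy, hEy⟩ := hx
    refine ⟨Sum.elim y 0, ih y hy, ?_⟩
    simp [Matrix.fromCols_mulVec_sumElim, hEy]

/-- The Wong subspaces of the pencil `sE - A` are contained in the projections (onto the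
first `N` coordinates) of the Wong subspaces of the augmented pencil `s[E,0] - [A,B]`;
consequently the same holds for the Wong limits. -/
theorem wongV_subset_proj_wongV_aug {L N Q : ℕ}
    (E A : Matrix (Fin L) (Fin N) ℝ) (B : Matrix (Fin L) (Fin Q) ℝ) :
    (∀ i : ℕ, wongV E A i ⊆
      (fun (v : Fin N ⊕ Fin Q → ℝ) (j : Fin N) => v (Sum.inl j)) ''
        wongV (Matrix.fromCols E (0 : Matrix (Fin L) (Fin Q) ℝ))
          (Matrix.fromCols A B) i) ∧
    wongVstar E A ⊆
      (fun (v : Fin N ⊕ Fin Q → ℝ) (j : Fin N) => v (Sum.inl j)) ''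
        wongVstar (Matrix.fromCols E (0 : Matrix (Fin L) (Fin Q) ℝ))
          (Matrix.fromCols A B) := by
  constructor
  · intro i x hx
    exact ⟨Sum.elim x 0, aug_mem E A B i x hx, rfl⟩
  · intro x hx
    refine ⟨Sum.elim x 0, ?_, rfl⟩
    rw [wongVstar, Set.mem_iInter] at hx ⊢
    exact fun i => aug_mem E A B i x (hx i)
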